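/- Let T be a cubic tree with an even number of leaves. Then the spine of T is cubic (every vertex of the spine has degree 1 or 3 in the spine) if and only if T has no odd edges. -/

import Mathlib

open SimpleGraph

/-- The degree of a vertex, as the cardinality of its neighbour set. -/
noncomputable def ndeg {W : Type*} (T : SimpleGraph W) (v : W) : ℕ :=
  (T.neighborSet v).ncard

/-- A cubic tree: a tree all of whose vertices have degree 1 or 3. -/
def IsCubicTree {W : Type*} (T : SimpleGraph W) : Prop :=
  T.IsTree ∧ ∀ v, ndeg T v = 1 ∨ ndeg T v = 3

/-- The shore of the cut induced by the tree edge `t₁t₂`: all vertices of the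
graph mapped by `δ` to leaves of the component of `T - t₁t₂` containing `t₁`. -/
def treeShore {U W : Type*} (T : SimpleGraph W) (δ : U → W) (t₁ t₂ : W) : Set U :=
  {v | (T.deleteEdges {s(t₁, t₂)}).Reachable (δ v) t₁}

/-- The set of leaves of `T` contained in the component of `T - t₁t₂`
containing `t₁`. -/
def sideLeaves {W : Type*} (T : SimpleGraph W) (t₁ t₂ : W) : Set W :=
  {t | ndeg T t = 1 ∧ (T.deleteEdges {s(t₁, t₂)}).Reachable t t₁}

/-- An odd edge of a cubic tree: an edge of the spine (neither endpoint is a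
leaf) such that each of the two components of `T - e` contains an odd number of
leaves of `T`. -/
def IsOddEdge {W : Type*} (T : SimpleGraph W) (t₁ t₂ : W) : Prop :=
  T.Adj t₁ t₂ ∧ ndeg T t₁ ≠ 1 ∧ ndeg T t₂ ≠ 1 ∧
    Odd (sideLeaves T t₁ t₂).ncard ∧ Odd (sideLeaves T t₂ t₁).ncard

/-- The degree of a vertex within the spine of `T` (the tree `T` minus its
leaves): the number of its non-leaf neighbours. -/
noncomputable def spineDeg {W : Type*} (T : SimpleGraph W) (t : W) : ℕ :=
  {t' | T.Adj t t' ∧ ndeg T t' ≠ 1}.ncard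

/-! ### Auxiliary definitions and lemmas -/

section Aux

variable {W : Type*}

lemma ndeg_ne_one {T : SimpleGraph W} {v a b : W} (ha : T.Adj v a) (hb : T.Adj v b)
    (hab : a ≠ b) : ndeg T v ≠ 1 := by
  intro h
  obtain ⟨x, hx⟩ := Set.ncard_eq_one.mp h
  have h1 : a ∈ T.neighborSet v := ha
  have h2 : b ∈ T.neighborSet v := hb
  rw [hx] at h1 h2
  exact hab (h1.trans h2.symm)

/-- The restriction of `G` to non-leaves of `T`. -/
def spineOn (T G : SimpleGraph W) : SimpleGraph W where
  Adj a b := G.Adj a b ∧ ndeg T a ≠ 1 ∧ ndeg T b ≠ 1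
  symm := ⟨fun a b (h : G.Adj a b ∧ ndeg T a ≠ 1 ∧ ndeg T b ≠ 1) => ⟨h.1.symm, h.2.2, h.2.1⟩⟩
  loopless := ⟨fun a (h : G.Adj a a ∧ ndeg T a ≠ 1 ∧ ndeg T a ≠ 1) => G.loopless.irrefl a h.1⟩

lemma spineOn_adj {T G : SimpleGraph W} {a b : W} :
    (spineOn T G).Adj a b ↔ G.Adj a b ∧ ndeg T a ≠ 1 ∧ ndeg T b ≠ 1 := Iff.rfl

lemma spineOn_le (T G : SimpleGraph W) : spineOn T G ≤ G := fun _ _ h => h.1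

lemma spineOn_deleteEdges (T G : SimpleGraph W) (s : Set (Sym2 W)) :
    spineOn T (G.deleteEdges s) = (spineOn T G).deleteEdges s := by
  ext a b
  simp only [spineOn, deleteEdges_adj]
  tauto

lemma neighborSet_spineOn (T : SimpleGraph W) {v : W} (hv : ndeg T v ≠ 1) :
    (spineOn T T).neighborSet v = {t' | T.Adj v t' ∧ ndeg T t' ≠ 1} := by
  ext w
  simp only [mem_neighborSet, spineOn, Set.mem_setOf_eq]
  tauto

lemma ndeg_spineOn (T : SimpleGraph W) {v : W} (hv : ndeg T v ≠ 1) :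
    ndeg (spineOn T T) v = spineDeg T v := by
  rw [ndeg, neighborSet_spineOn T hv, spineDeg]

/-- upgrading a path between non-leaves to a path in the spine -/
lemma reachable_spineOn (T G : SimpleGraph W) (hle : G ≤ T) :
    ∀ {a b : W} (p : G.Walk a b), p.IsPath → ndeg T a ≠ 1 → ndeg T b ≠ 1 →
      (spineOn T G).Reachable a b := by
  intro a b p
  induction p with
  | nil => intro _ _ _; rfl
  | @cons u v b h q ih =>
    intro hp hu hb
    have hv : ndeg T v ≠ 1 := by
      cases q with
      | nil => exact hb
      | @cons v w b h2 q2 =>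
        have hnd := hp.support_nodup
        simp only [SimpleGraph.Walk.support_cons, List.nodup_cons, List.mem_cons] at hnd
        have huw : u ≠ w := by
          intro e; exact hnd.1 (Or.inr (e ▸ q2.start_mem_support))
        exact ndeg_ne_one (hle h.symm) (hle h2) huw
    have hadj : (spineOn T G).Adj u v := ⟨h, hu, hv⟩
    exact hadj.reachable.trans (ih hp.of_cons hv hb)

lemma not_reachable_deleteEdges {G : SimpleGraph W} (hac : G.IsAcyclic) {a b : W}
    (h : G.Adj a b) : ¬ (G.deleteEdges {s(a, b)}).Reachable a b :=
  isAcyclic_iff_forall_adj_isBridge.mp hac h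

lemma reach_side {G : SimpleGraph W} (b : W) :
    ∀ {v a : W}, G.Walk v a →
      (G.deleteEdges {s(a, b)}).Reachable v a ∨ (G.deleteEdges {s(a, b)}).Reachable v b := by
  intro v a w
  induction w with
  | nil => exact Or.inl (Reachable.refl _)
  | @cons u x c hadj q ih =>
    by_cases he : s(u, x) = s(c, b)
    · rw [Sym2.eq_iff] at he
      rcases he with ⟨rfl, rfl⟩ | ⟨rfl, rfl⟩
      · exact Or.inl (Reachable.refl _)
      · exact Or.inr (Reachable.refl _)
    · have hadj' : (G.deleteEdges {s(c, b)}).Adj u x := by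
        rw [deleteEdges_adj]
        exact ⟨hadj, by simpa using he⟩
      rcases ih with h' | h'
      · exact Or.inl (hadj'.reachable.trans h')
      · exact Or.inr (hadj'.reachable.trans h')

lemma IsAcyclic.mono' {G H : SimpleGraph W} (hle : G ≤ H) (h : H.IsAcyclic) : G.IsAcyclic :=
  fun _ c hc => h (c.mapLe hle) (hc.mapLe hle)

lemma IsAcyclic.induce' {G : SimpleGraph W} (h : G.IsAcyclic) (s : Set W) :
    (G.induce s).IsAcyclic :=
  fun _ c hc =>
    h (c.map (SimpleGraph.Embedding.induce (G := G) s).toHom)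
      (hc.map (SimpleGraph.Embedding.induce (G := G) s).injective)

lemma reachable_induce {G : SimpleGraph W} {C : Set W} :
    ∀ {v t : W} (p : G.Walk v t) (_ : ∀ x ∈ p.support, x ∈ C) (hv : v ∈ C) (ht : t ∈ C),
      (G.induce C).Reachable ⟨v, hv⟩ ⟨t, ht⟩ := by
  intro v t p
  induction p with
  | nil => intro _ _ _; rfl
  | @cons u x c hadj q ih =>
    intro hsupp hv ht
    have hx : x ∈ C := hsupp x (by simp)
    have h1 : (G.induce C).Adj ⟨u, hv⟩ ⟨x, hx⟩ := hadj
    exact h1.reachable.trans (ih (fun y hy => hsupp y (by simp [hy])) hx ht)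

lemma ndeg_eq_degree [Fintype W] (G : SimpleGraph W) [DecidableRel G.Adj] (v : W) :
    ndeg G v = G.degree v := by
  rw [ndeg, degree, neighborFinset_def, Set.ncard_eq_toFinset_card']

/-- The key counting lemma: for an edge `t₁t₂` of an acyclic graph, the sum of
the `G`-degrees over the component of `G - t₁t₂` containing `t₁` is twice its
cardinality minus one. -/
lemma side_count [Finite W] {G : SimpleGraph W} (hac : G.IsAcyclic) {t₁ t₂ : W}
    (h : G.Adj t₁ t₂) :
    (∑ v ∈ (Set.toFinite {v | (G.deleteEdges {s(t₁, t₂)}).Reachable v t₁}).toFinset,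
        ndeg G v) + 1
      = 2 * {v | (G.deleteEdges {s(t₁, t₂)}).Reachable v t₁}.ncard := by
  classical
  haveI : Fintype W := Fintype.ofFinite W
  set G' := G.deleteEdges {s(t₁, t₂)} with hG'
  set C := {v | G'.Reachable v t₁} with hC
  have hCfin : C.Finite := Set.toFinite C
  have ht1 : t₁ ∈ C := Reachable.refl _
  have ht2 : t₂ ∉ C := fun hr => not_reachable_deleteEdges hac h hr.symm
  have hclosed : ∀ v ∈ C, ∀ w, G'.Adj v w → w ∈ C :=
    fun v hv w hw => hw.symm.reachable.trans hv
  -- the induced graph on C is a tree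
  set H := G'.induce C with hH
  have hacH : H.IsAcyclic := IsAcyclic.induce' (IsAcyclic.mono' (deleteEdges_le _) hac) C
  have hconnH : H.Connected := by
    haveI : Nonempty C := ⟨⟨t₁, ht1⟩⟩
    refine ⟨fun v w => ?_⟩
    have hv := v.2; have hw := w.2
    obtain ⟨pv⟩ := hv; obtain ⟨pw⟩ := hw
    have key : ∀ (u : W) (hu : u ∈ C) (p : G'.Walk u t₁),
        H.Reachable ⟨u, hu⟩ ⟨t₁, ht1⟩ := by
      intro u hu p
      refine reachable_induce p (fun x hx => ?_) hu ht1
      exact ⟨p.dropUntil x hx⟩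
    obtain ⟨v', hv'⟩ := v
    obtain ⟨w', hw'⟩ := w
    exact (key v' hv' pv).trans (key w' hw' pw).symm
  have htreeH : H.IsTree := ⟨hconnH, hacH⟩
  -- counting
  have hedge : H.edgeFinset.card + 1 = Fintype.card C := htreeH.card_edgeFinset
  have hsum : ∑ v : C, H.degree v = 2 * H.edgeFinset.card :=
    sum_degrees_eq_twice_card_edges H
  have hpos : 1 ≤ Fintype.card C := Fintype.card_pos_iff.mpr ⟨⟨t₁, ht1⟩⟩
  have hsum2 : (∑ v : C, H.degree v) + 2 = 2 * Fintype.card C := by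
    rw [hsum]; omega
  -- H-degrees equal G'-degrees
  have hdeg : ∀ v : C, H.degree v = ndeg G' v.1 := by
    intro v
    rw [← ndeg_eq_degree]
    rw [ndeg, ndeg]
    have himg : Subtype.val '' (H.neighborSet v) = G'.neighborSet v.1 := by
      ext w
      simp only [Set.mem_image, mem_neighborSet]
      constructor
      · rintro ⟨⟨w', hw'⟩, hadj, rfl⟩; exact hadj
      · intro hadj; exact ⟨⟨w, hclosed v.1 v.2 w hadj⟩, hadj, rfl⟩
    rw [← himg, Set.ncard_image_of_injective _ Subtype.val_injective]
  -- sum over the subtype equals sum over the finset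
  have hsub : ∑ v ∈ hCfin.toFinset, ndeg G' v = ∑ v : C, ndeg G' v.1 := by
    exact Finset.sum_subtype _ (fun x => hCfin.mem_toFinset) _
  -- G-degrees vs G'-degrees on C
  have hd1 : ∀ v ∈ C, v ≠ t₁ → ndeg G v = ndeg G' v := by
    intro v hv hvt
    have hvt2 : v ≠ t₂ := fun e => ht2 (e ▸ hv)
    rw [ndeg, ndeg]
    congr 1
    ext w
    rw [mem_neighborSet, mem_neighborSet, hG', deleteEdges_adj, Set.mem_singleton_iff]
    constructor
    · intro hw
      refine ⟨hw, fun e => ?_⟩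
      rcases Sym2.eq_iff.mp e with ⟨h1, _⟩ | ⟨h1, _⟩
      · exact hvt h1
      · exact hvt2 h1
    · exact fun hw => hw.1
  have hd2 : ndeg G t₁ = ndeg G' t₁ + 1 := by
    have hset : G'.neighborSet t₁ = G.neighborSet t₁ \ {t₂} := by
      ext w
      rw [mem_neighborSet, Set.mem_diff, Set.mem_singleton_iff, mem_neighborSet, hG',
        deleteEdges_adj, Set.mem_singleton_iff]
      constructor
      · rintro ⟨hw1, hw2⟩
        exact ⟨hw1, fun e => hw2 (by rw [e])⟩
      · rintro ⟨hw1, hw2⟩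
        exact ⟨hw1, fun e => hw2 (Sym2.congr_right.mp e)⟩
    have hmem : t₂ ∈ G.neighborSet t₁ := h
    rw [ndeg, ndeg, hset]
    exact (Set.ncard_diff_singleton_add_one hmem (Set.toFinite _)).symm
  have hsplit : ∑ v ∈ hCfin.toFinset, ndeg G v = (∑ v ∈ hCfin.toFinset, ndeg G' v) + 1 := by
    have ht1' : t₁ ∈ hCfin.toFinset := by simp [hCfin.mem_toFinset]
    rw [← Finset.add_sum_erase _ _ ht1', ← Finset.add_sum_erase _ _ ht1', hd2]
    have : ∑ v ∈ hCfin.toFinset.erase t₁, ndeg G v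
        = ∑ v ∈ hCfin.toFinset.erase t₁, ndeg G' v := by
      apply Finset.sum_congr rfl
      intro x hx
      rw [Finset.mem_erase, hCfin.mem_toFinset] at hx
      exact hd1 x hx.2 hx.1
    rw [this]; ring
  have hcard : Fintype.card C = C.ncard := by
    rw [← Nat.card_coe_set_eq, Nat.card_eq_fintype_card]
  have hFeq : (Set.toFinite C).toFinset = hCfin.toFinset := rfl
  calc (∑ v ∈ hCfin.toFinset, ndeg G v) + 1
      = ((∑ v ∈ hCfin.toFinset, ndeg G' v) + 1) + 1 := by rw [hsplit]
    _ = (∑ v : C, H.degree v) + 2 := by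
        rw [hsub]
        have : ∑ v : C, ndeg G' v.1 = ∑ v : C, H.degree v :=
          Finset.sum_congr rfl (fun v _ => (hdeg v).symm)
        omega
    _ = 2 * Fintype.card C := hsum2
    _ = 2 * C.ncard := by rw [hcard]

/-- The non-leaf part of the side of a cut. -/
def SSide (T : SimpleGraph W) (t₁ t₂ : W) : Set W :=
  {v | (T.deleteEdges {s(t₁, t₂)}).Reachable v t₁ ∧ ndeg T v ≠ 1}

lemma sside_corr (T : SimpleGraph W) {t₁ t₂ : W} (h1 : ndeg T t₁ ≠ 1) :
    {v | ((spineOn T T).deleteEdges {s(t₁, t₂)}).Reachable v t₁} = SSide T t₁ t₂ := by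
  classical
  ext v
  constructor
  · intro hr
    refine ⟨hr.mono (deleteEdges_mono (spineOn_le T T)), ?_⟩
    obtain ⟨w⟩ := hr
    cases w with
    | nil => exact h1
    | cons hadj q =>
      have : (spineOn T T).Adj v _ := (deleteEdges_le _) hadj
      exact this.2.1
  · rintro ⟨hr, hv⟩
    obtain ⟨w⟩ := hr
    have hres := reachable_spineOn T (T.deleteEdges {s(t₁, t₂)}) (deleteEdges_le _)
      w.toPath.1 w.toPath.2 hv h1
    rwa [spineOn_deleteEdges] at hres

lemma side_leaf_card [Finite W] {T : SimpleGraph W} (hac : T.IsAcyclic)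
    (hcub : ∀ v, ndeg T v = 1 ∨ ndeg T v = 3) {t₁ t₂ : W} (hadj : T.Adj t₁ t₂) :
    (sideLeaves T t₁ t₂).ncard = (SSide T t₁ t₂).ncard + 1 := by
  classical
  have hsc := side_count hac hadj
  set C := {v | (T.deleteEdges {s(t₁, t₂)}).Reachable v t₁} with hC
  set F := (Set.toFinite C).toFinset with hF
  have hLset : sideLeaves T t₁ t₂ = ↑(F.filter (fun v => ndeg T v = 1)) := by
    ext v
    simp only [sideLeaves, Set.mem_setOf_eq, Finset.coe_filter, hF,
      Set.Finite.mem_toFinset, hC]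
    tauto
  have hSset : SSide T t₁ t₂ = ↑(F.filter (fun v => ¬ ndeg T v = 1)) := by
    ext v
    simp only [SSide, Set.mem_setOf_eq, Finset.coe_filter, hF,
      Set.Finite.mem_toFinset, hC]
    try tauto
  have hcardC : C.ncard = F.card := Set.ncard_eq_toFinset_card _ _
  have hsplitcard : (F.filter (fun v => ndeg T v = 1)).card
      + (F.filter (fun v => ¬ ndeg T v = 1)).card = F.card :=
    Finset.card_filter_add_card_filter_not _
  have hsum_split : (∑ v ∈ F.filter (fun v => ndeg T v = 1), ndeg T v)
      + (∑ v ∈ F.filter (fun v => ¬ ndeg T v = 1), ndeg T v) = ∑ v ∈ F, ndeg T v :=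
    Finset.sum_filter_add_sum_filter_not _ _ _
  have hsum1 : ∑ v ∈ F.filter (fun v => ndeg T v = 1), ndeg T v
      = (F.filter (fun v => ndeg T v = 1)).card := by
    rw [Finset.card_eq_sum_ones]
    apply Finset.sum_congr rfl
    intro x hx
    exact (Finset.mem_filter.mp hx).2
  have hsum3 : ∑ v ∈ F.filter (fun v => ¬ ndeg T v = 1), ndeg T v
      = 3 * (F.filter (fun v => ¬ ndeg T v = 1)).card := by
    have h3 : ∀ v ∈ F.filter (fun v => ¬ ndeg T v = 1), ndeg T v = 3 := fun v hv =>
      (hcub v).resolve_left (Finset.mem_filter.mp hv).2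
    rw [Finset.sum_congr rfl h3, Finset.sum_const, smul_eq_mul, Nat.mul_comm]
  rw [hLset, hSset, Set.ncard_coe_finset, Set.ncard_coe_finset]
  rw [hcardC] at hsc
  omega

lemma leaf_partition [Finite W] {T : SimpleGraph W} (hconn : T.Connected)
    (hac : T.IsAcyclic) {a b : W} (hadj : T.Adj a b) :
    {v | ndeg T v = 1}.ncard = (sideLeaves T a b).ncard + (sideLeaves T b a).ncard := by
  have hswap : ({s(b, a)} : Set (Sym2 W)) = {s(a, b)} := by rw [Sym2.eq_swap]
  have hset : {v | ndeg T v = 1} = sideLeaves T a b ∪ sideLeaves T b a := by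
    ext v
    simp only [Set.mem_setOf_eq, Set.mem_union, sideLeaves, hswap]
    constructor
    · intro hv
      obtain ⟨w⟩ := hconn.preconnected v a
      rcases reach_side b w with h' | h'
      · exact Or.inl ⟨hv, h'⟩
      · exact Or.inr ⟨hv, h'⟩
    · rintro (⟨hv, _⟩ | ⟨hv, _⟩) <;> exact hv
  have hdisj : Disjoint (sideLeaves T a b) (sideLeaves T b a) := by
    rw [Set.disjoint_left]
    rintro v ⟨_, hva⟩ ⟨_, hvb⟩
    rw [hswap] at hvb
    exact not_reachable_deleteEdges hac hadj (hva.symm.trans hvb)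
  rw [hset, Set.ncard_union_eq hdisj (Set.toFinite _) (Set.toFinite _)]

lemma global_count [Finite W] {T : SimpleGraph W} (htree : T.IsTree)
    (hcub : ∀ v, ndeg T v = 1 ∨ ndeg T v = 3) :
    {v | ndeg T v = 1}.ncard = {v | ndeg T v ≠ 1}.ncard + 2 := by
  classical
  haveI : Fintype W := Fintype.ofFinite W
  have hhs : ∑ v, T.degree v = 2 * T.edgeFinset.card := sum_degrees_eq_twice_card_edges T
  have hec : T.edgeFinset.card + 1 = Fintype.card W := htree.card_edgeFinset
  have hnd : ∑ v, ndeg T v = ∑ v, T.degree v :=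
    Finset.sum_congr rfl (fun v _ => ndeg_eq_degree T v)
  set F : Finset W := Finset.univ with hF
  have hsplitcard : (F.filter (fun v => ndeg T v = 1)).card
      + (F.filter (fun v => ¬ ndeg T v = 1)).card = F.card :=
    Finset.card_filter_add_card_filter_not _
  have hsum_split : (∑ v ∈ F.filter (fun v => ndeg T v = 1), ndeg T v)
      + (∑ v ∈ F.filter (fun v => ¬ ndeg T v = 1), ndeg T v) = ∑ v ∈ F, ndeg T v :=
    Finset.sum_filter_add_sum_filter_not _ _ _
  have hsum1 : ∑ v ∈ F.filter (fun v => ndeg T v = 1), ndeg T v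
      = (F.filter (fun v => ndeg T v = 1)).card := by
    rw [Finset.card_eq_sum_ones]
    exact Finset.sum_congr rfl (fun x hx => (Finset.mem_filter.mp hx).2)
  have hsum3 : ∑ v ∈ F.filter (fun v => ¬ ndeg T v = 1), ndeg T v
      = 3 * (F.filter (fun v => ¬ ndeg T v = 1)).card := by
    have h3 : ∀ v ∈ F.filter (fun v => ¬ ndeg T v = 1), ndeg T v = 3 := fun v hv =>
      (hcub v).resolve_left (Finset.mem_filter.mp hv).2
    rw [Finset.sum_congr rfl h3, Finset.sum_const, smul_eq_mul, Nat.mul_comm]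
  have hL : {v | ndeg T v = 1}.ncard = (F.filter (fun v => ndeg T v = 1)).card := by
    have : {v | ndeg T v = 1} = ↑(F.filter (fun v => ndeg T v = 1)) := by
      ext v; simp [hF]
    rw [this, Set.ncard_coe_finset]
  have hS : {v | ndeg T v ≠ 1}.ncard = (F.filter (fun v => ¬ ndeg T v = 1)).card := by
    have : {v | ndeg T v ≠ 1} = ↑(F.filter (fun v => ¬ ndeg T v = 1)) := by
      ext v; simp [hF]
    rw [this, Set.ncard_coe_finset]
  have hcardW : F.card = Fintype.card W := rfl
  rw [hL, hS]
  omega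

lemma spine_side_odd [Finite W] {T : SimpleGraph W} (hac : T.IsAcyclic)
    (hsp : ∀ t, ndeg T t ≠ 1 → spineDeg T t = 1 ∨ spineDeg T t = 3) {t₁ t₂ : W}
    (hadj : T.Adj t₁ t₂) (h1 : ndeg T t₁ ≠ 1) (h2 : ndeg T t₂ ≠ 1) :
    Odd (SSide T t₁ t₂).ncard := by
  classical
  have hacS : (spineOn T T).IsAcyclic := IsAcyclic.mono' (spineOn_le T T) hac
  have hadjS : (spineOn T T).Adj t₁ t₂ := ⟨hadj, h1, h2⟩
  have hsc := side_count hacS hadjS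
  rw [sside_corr T h1] at hsc
  set F := (Set.toFinite (SSide T t₁ t₂)).toFinset with hF
  have hcardF : (SSide T t₁ t₂).ncard = F.card := Set.ncard_eq_toFinset_card _ _
  have hodd : ∀ v ∈ F, ndeg (spineOn T T) v % 2 = 1 := by
    intro v hv
    rw [Set.Finite.mem_toFinset] at hv
    have hvn : ndeg T v ≠ 1 := hv.2
    rw [ndeg_spineOn T hvn]
    rcases hsp v hvn with h | h <;> rw [h]
  have hmod : (∑ v ∈ F, ndeg (spineOn T T) v) % 2 = F.card % 2 := by
    rw [Finset.sum_nat_mod]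
    have : ∑ v ∈ F, ndeg (spineOn T T) v % 2 = ∑ v ∈ F, 1 :=
      Finset.sum_congr rfl hodd
    rw [this, Finset.sum_const, smul_eq_mul, mul_one]
  rw [Nat.odd_iff, hcardF]
  omega

end Aux

/-- For a cubic tree with an even number of leaves, the spine is cubic if and
only if the tree has no odd edges. -/
theorem spine_cubic_iff_no_odd_edges {W : Type*} [Finite W] (T : SimpleGraph W)
    (hT : IsCubicTree T) (heven : Even {v | ndeg T v = 1}.ncard) :
    (∀ t, ndeg T t ≠ 1 → spineDeg T t = 1 ∨ spineDeg T t = 3) ↔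
      ∀ t₁ t₂, ¬ IsOddEdge T t₁ t₂ := by
  classical
  obtain ⟨htree, hcub⟩ := hT
  have hac : T.IsAcyclic := htree.2
  have hconn : T.Connected := htree.1
  constructor
  · intro hsp t₁ t₂ hodd
    obtain ⟨hadj, h1, h2, ho1, _⟩ := hodd
    have hslc := side_leaf_card hac hcub hadj
    have hsso := spine_side_odd hac hsp hadj h1 h2
    rw [Nat.odd_iff] at ho1 hsso
    omega
  · intro hnodd t ht
    by_contra hsp
    push_neg at hsp
    obtain ⟨hsp1, hsp3⟩ := hsp
    have hdeg3 : ndeg T t = 3 := (hcub t).resolve_left ht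
    have hle3 : spineDeg T t ≤ 3 := by
      rw [← hdeg3]
      exact Set.ncard_le_ncard (fun x hx => hx.1) (Set.toFinite _)
    have hSeven : Even {v | ndeg T v ≠ 1}.ncard := by
      have hgc := global_count htree hcub
      rw [Nat.even_iff] at heven ⊢
      omega
    have hcase : spineDeg T t = 0 ∨ spineDeg T t = 2 := by omega
    rcases hcase with h0 | h2
    · -- spine degree 0 : the whole spine is {t}, contradicting evenness
      have h0' : {t' | T.Adj t t' ∧ ndeg T t' ≠ 1}.ncard = 0 := h0
      have hempty : {t' | T.Adj t t' ∧ ndeg T t' ≠ 1} = ∅ :=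
        (Set.ncard_eq_zero (Set.toFinite _)).mp h0'
      have hSone : {v | ndeg T v ≠ 1} = {t} := by
        ext v
        simp only [Set.mem_setOf_eq, Set.mem_singleton_iff]
        constructor
        · intro hv
          obtain ⟨w⟩ := hconn.preconnected v t
          have hres := reachable_spineOn T T le_rfl w.toPath.1 w.toPath.2 hv ht
          obtain ⟨w2⟩ := hres
          cases hw2 : w2.reverse with
          | nil => rfl
          | cons hadj q =>
            have hx : _ ∈ {t' | T.Adj t t' ∧ ndeg T t' ≠ 1} :=
              ⟨(spineOn_adj.mp hadj).1, (spineOn_adj.mp hadj).2.2⟩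
            rw [hempty] at hx
            exact absurd hx (Set.notMem_empty _)
        · rintro rfl; exact ht
      have hone : {v | ndeg T v ≠ 1}.ncard = 1 := by rw [hSone, Set.ncard_singleton]
      rw [Nat.even_iff] at hSeven
      omega
    · -- spine degree 2 : find an odd edge
      have h2' : {t' | T.Adj t t' ∧ ndeg T t' ≠ 1}.ncard = 2 := h2
      obtain ⟨u₁, u₂, hne, hpair⟩ := Set.ncard_eq_two.mp h2'
      have hu₁ : T.Adj t u₁ ∧ ndeg T u₁ ≠ 1 := by
        have hm : u₁ ∈ {t' | T.Adj t t' ∧ ndeg T t' ≠ 1} := by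
          rw [hpair]; exact Set.mem_insert _ _
        exact hm
      have hu₂ : T.Adj t u₂ ∧ ndeg T u₂ ≠ 1 := by
        have hm : u₂ ∈ {t' | T.Adj t t' ∧ ndeg T t' ≠ 1} := by
          rw [hpair]; exact Set.mem_insert_of_mem _ rfl
        exact hm
      have htnot : ∀ u : W, T.Adj u t → t ∉ SSide T u t := by
        intro u hadj hmem
        exact not_reachable_deleteEdges hac hadj hmem.1.symm
      -- the two spine sides are disjoint
      have hdisj12 : Disjoint (SSide T u₁ t) (SSide T u₂ t) := by
        rw [Set.disjoint_left]
        rintro v ⟨hv1, _⟩ ⟨hv2, _⟩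
        obtain ⟨w₂⟩ := hv2
        by_cases hts : t ∈ w₂.toPath.1.support
        · exact not_reachable_deleteEdges hac hu₂.1.symm
            (Reachable.symm ⟨w₂.toPath.1.dropUntil t hts⟩)
        · have hedges : ∀ e ∈ w₂.toPath.1.edges, e ∈ (T.deleteEdges {s(u₁, t)}).edgeSet := by
            intro e he
            have heT : e ∈ (T.deleteEdges {s(u₂, t)}).edgeSet :=
              w₂.toPath.1.edges_subset_edgeSet he
            rw [edgeSet_deleteEdges] at heT ⊢
            refine ⟨heT.1, ?_⟩
            simp only [Set.mem_singleton_iff]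
            rintro rfl
            exact hts (w₂.toPath.1.snd_mem_support_of_mem_edges he)
          have hreach : (T.deleteEdges {s(u₁, t)}).Reachable v u₂ :=
            ⟨w₂.toPath.1.transfer _ hedges⟩
          have hadj2 : (T.deleteEdges {s(u₁, t)}).Adj u₂ t := by
            rw [deleteEdges_adj]
            refine ⟨hu₂.1.symm, ?_⟩
            simp only [Set.mem_singleton_iff, Sym2.eq_iff]
            rintro (⟨h1', h2'⟩ | ⟨h1', h2'⟩)
            · exact hne h1'.symm
            · exact T.loopless.irrefl t (h1' ▸ hu₂.1)
          exact not_reachable_deleteEdges hac hu₁.1.symm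
            (hv1.symm.trans (hreach.trans hadj2.reachable))
      -- the spine is covered by the two sides and t
      have hcover : {v | ndeg T v ≠ 1} = (SSide T u₁ t ∪ SSide T u₂ t) ∪ {t} := by
        ext v
        simp only [Set.mem_setOf_eq, Set.mem_union, Set.mem_singleton_iff]
        constructor
        · intro hv
          by_cases hvt : v = t
          · exact Or.inr hvt
          · left
            obtain ⟨w⟩ := hconn.preconnected v t
            have hres := reachable_spineOn T T le_rfl w.toPath.1 w.toPath.2 hv ht
            obtain ⟨w2⟩ := hres
            obtain ⟨q, hq⟩ : ∃ q : (spineOn T T).Walk t v, q.IsPath :=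
              ⟨w2.toPath.1.reverse, w2.toPath.2.reverse⟩
            cases q with
            | nil => exact absurd rfl hvt
            | @cons _ x _ hadj q₂ =>
              rw [Walk.cons_isPath_iff] at hq
              obtain ⟨hq₂, htns⟩ := hq
              have hx : x ∈ {t' | T.Adj t t' ∧ ndeg T t' ≠ 1} :=
                ⟨(spineOn_adj.mp hadj).1, (spineOn_adj.mp hadj).2.2⟩
              rw [hpair] at hx
              have hedges : ∀ (u' : W), ∀ e ∈ q₂.reverse.edges,
                  e ∈ (T.deleteEdges {s(u', t)}).edgeSet := by
                intro u' e he
                rw [Walk.edges_reverse, List.mem_reverse] at he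
                have heS : e ∈ (spineOn T T).edgeSet := q₂.edges_subset_edgeSet he
                have heT : e ∈ T.edgeSet := edgeSet_mono (spineOn_le T T) heS
                rw [edgeSet_deleteEdges]
                refine ⟨heT, ?_⟩
                simp only [Set.mem_singleton_iff]
                rintro rfl
                exact htns (q₂.snd_mem_support_of_mem_edges he)
              simp only [Set.mem_insert_iff, Set.mem_singleton_iff] at hx
              rcases hx with rfl | rfl
              · exact Or.inl ⟨⟨q₂.reverse.transfer _ (hedges x)⟩, hv⟩
              · exact Or.inr ⟨⟨q₂.reverse.transfer _ (hedges x)⟩, hv⟩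
        · rintro ((⟨_, hv⟩ | ⟨_, hv⟩) | rfl)
          · exact hv
          · exact hv
          · exact ht
      have hdisjt : Disjoint (SSide T u₁ t ∪ SSide T u₂ t) ({t} : Set W) := by
        rw [Set.disjoint_singleton_right]
        rintro (h | h)
        · exact htnot u₁ hu₁.1.symm h
        · exact htnot u₂ hu₂.1.symm h
      have hcount : {v | ndeg T v ≠ 1}.ncard
          = (SSide T u₁ t).ncard + (SSide T u₂ t).ncard + 1 := by
        rw [hcover, Set.ncard_union_eq hdisjt (Set.toFinite _) (Set.toFinite _),
          Set.ncard_union_eq hdisj12 (Set.toFinite _) (Set.toFinite _), Set.ncard_singleton]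
      have hpar : Even (SSide T u₁ t).ncard ∨ Even (SSide T u₂ t).ncard := by
        rcases Nat.even_or_odd (SSide T u₁ t).ncard with h | h
        · exact Or.inl h
        · right
          rw [Nat.even_iff] at hSeven ⊢
          rw [Nat.odd_iff] at h
          omega
      obtain ⟨u, hu, huev⟩ : ∃ u, (T.Adj t u ∧ ndeg T u ≠ 1) ∧ Even (SSide T u t).ncard := by
        rcases hpar with h | h
        · exact ⟨u₁, hu₁, h⟩
        · exact ⟨u₂, hu₂, h⟩
      have hodd2 : Odd (sideLeaves T u t).ncard := by
        have hslc := side_leaf_card hac hcub hu.1.symm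
        rw [Nat.odd_iff]
        rw [Nat.even_iff] at huev
        omega
      have hodd1 : Odd (sideLeaves T t u).ncard := by
        have hlp := leaf_partition hconn hac hu.1
        rw [Nat.odd_iff] at hodd2 ⊢
        rw [Nat.even_iff] at heven
        omega
      exact hnodd t u ⟨hu.1, ht, hu.2, hodd1, hodd2⟩
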